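/- Let h : (0,∞) → ℝ be positive, non-decreasing and bounded, let u₁ be fixed, and let f₁, f₂ : (0,∞) → ℝ be measurable, non-negative, locally integrable functions with ∫_0^∞ f₁(y) dy = ∫_0^∞ f₂(y) dy = ∞ and f₁ ≤ f₂ pointwise. Then ∫_0^∞ h(x) f₁(x) exp(−∫_0^x f₁(y) dy) dx ≥ ∫_0^∞ h(x) f₂(x) exp(−∫_0^x f₂(y) dy) dx; that is, for fixed first factor h, the map f ↦ ∫_0^∞ h(x) f(x) exp(−∫_0^x f(y) dy) dx is non-increasing in f on non-negative locally integrable functions with divergent integral. -/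

import Mathlib

open Set Filter MeasureTheory

namespace Stmt15

noncomputable def FF (g : ℝ → ℝ) (x : ℝ) : ℝ := ∫ y in Set.Ioo 0 x, g y

lemma FF_nonneg {g : ℝ → ℝ} (hg : ∀ x, 0 ≤ g x) (x : ℝ) : 0 ≤ FF g x :=
  setIntegral_nonneg measurableSet_Ioo (fun y _ => hg y)

lemma FF_mono {g : ℝ → ℝ} (hg : ∀ x, 0 ≤ g x)
    (hloc : ∀ x, IntegrableOn g (Set.Ioo 0 x)) : Monotone (FF g) := by
  intro a b hab
  apply setIntegral_mono_set (hloc b)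
  · exact Filter.Eventually.of_forall (fun y => hg y)
  · exact Filter.Eventually.of_forall (Set.Ioo_subset_Ioo le_rfl hab)

lemma exp_neg_lip {s t : ℝ} (hs : 0 ≤ s) (ht : 0 ≤ t) :
    |Real.exp (-s) - Real.exp (-t)| ≤ |s - t| := by
  wlog h : s ≤ t generalizing s t
  · rw [abs_sub_comm, abs_sub_comm s t]; exact this ht hs (le_of_not_ge h)
  have h1 : Real.exp (s - t) ≥ 1 + (s - t) := by
    have := Real.add_one_le_exp (s - t); linarith
  have h2 : Real.exp (-s) ≤ 1 := Real.exp_le_one_iff.2 (by linarith)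
  have h3 : Real.exp (-t) = Real.exp (-s) * Real.exp (s - t) := by
    rw [← Real.exp_add]; ring_nf
  have h4 : (0:ℝ) < Real.exp (-s) := Real.exp_pos _
  have h5 : Real.exp (-t) ≤ Real.exp (-s) := Real.exp_le_exp.2 (by linarith)
  rw [abs_of_nonneg (by linarith), abs_of_nonpos (by linarith)]
  nlinarith [mul_nonneg (sub_nonneg.2 h2) (sub_nonneg.2 h)]

/-- the key identity for continuous nonneg integrands -/
lemma cont_key {ψ : ℝ → ℝ} (hψc : Continuous ψ) (hψ : ∀ x, 0 ≤ ψ x)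
    {a b : ℝ} (ha : 0 ≤ a) (hab : a ≤ b) :
    ∫ x in Set.Ioo a b, ψ x * Real.exp (-(FF ψ x))
      = Real.exp (-(FF ψ a)) - Real.exp (-(FF ψ b)) := by
  set Φ : ℝ → ℝ := fun x => ∫ t in (0:ℝ)..x, ψ t with hΦ
  have hΦF : ∀ x, 0 ≤ x → Φ x = FF ψ x := by
    intro x hx
    rw [hΦ]
    simp only
    rw [intervalIntegral.integral_of_le hx, integral_Ioc_eq_integral_Ioo]
    rfl
  have hderiv : ∀ x, HasDerivAt Φ (ψ x) x := by
    intro x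
    exact intervalIntegral.integral_hasDerivAt_right
      (hψc.intervalIntegrable 0 x)
      hψc.stronglyMeasurable.stronglyMeasurableAtFilter
      hψc.continuousAt
  have hΦcont : Continuous Φ := by
    apply continuous_iff_continuousAt.2
    exact fun x => (hderiv x).continuousAt
  have hE : ∀ x ∈ Set.uIcc a b,
      HasDerivAt (fun y => -Real.exp (-(Φ y))) (ψ x * Real.exp (-(Φ x))) x := by
    intro x _
    have h1 : HasDerivAt (fun y => -(Φ y)) (-(ψ x)) x := (hderiv x).neg
    have h2 := h1.exp
    have h3 := h2.neg
    rw [show ψ x * Real.exp (-(Φ x)) = -(Real.exp (-(Φ x)) * -(ψ x)) by ring]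
    exact h3
  have hint : IntervalIntegrable (fun x => ψ x * Real.exp (-(Φ x))) volume a b :=
    (hψc.mul ((hΦcont.neg).rexp)).intervalIntegrable a b
  have := intervalIntegral.integral_eq_sub_of_hasDerivAt hE hint
  rw [intervalIntegral.integral_of_le hab, integral_Ioc_eq_integral_Ioo] at this
  have hcongr : ∫ x in Set.Ioo a b, ψ x * Real.exp (-(Φ x))
      = ∫ x in Set.Ioo a b, ψ x * Real.exp (-(FF ψ x)) := by
    apply setIntegral_congr_fun measurableSet_Ioo
    intro x hx
    dsimp only
    rw [hΦF x (le_of_lt (lt_of_le_of_lt ha hx.1))]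
  rw [hcongr] at this
  rw [this, hΦF a ha, hΦF b (ha.trans hab)]
  ring

lemma integrableOn_mul_exp {g : ℝ → ℝ} (hm : Measurable g) (hg : ∀ x, 0 ≤ g x)
    (hloc : ∀ x, IntegrableOn g (Set.Ioo 0 x)) {a b : ℝ} (ha : 0 ≤ a) :
    IntegrableOn (fun x => g x * Real.exp (-(FF g x))) (Set.Ioo a b) := by
  have hFm : Measurable (FF g) := (FF_mono hg hloc).measurable
  have hsub : Set.Ioo a b ⊆ Set.Ioo 0 b := Set.Ioo_subset_Ioo ha le_rfl
  apply Integrable.mono ((hloc b).mono_set hsub)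
  · exact ((hm.mul ((hFm.neg).exp)).aestronglyMeasurable).restrict
  · apply Filter.Eventually.of_forall
    intro x
    rw [Real.norm_eq_abs, Real.norm_eq_abs, abs_of_nonneg (hg x),
      abs_of_nonneg (mul_nonneg (hg x) (Real.exp_pos _).le)]
    nlinarith [Real.exp_le_one_iff.2 (neg_nonpos.2 (FF_nonneg hg x)), hg x,
      (Real.exp_pos (-(FF g x))).le]


lemma key {g : ℝ → ℝ} (hm : Measurable g) (hg : ∀ x, 0 ≤ g x)
    (hloc : ∀ x, IntegrableOn g (Set.Ioo 0 x)) {a b : ℝ} (ha : 0 ≤ a) (hab : a ≤ b) :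
    ∫ x in Set.Ioo a b, g x * Real.exp (-(FF g x))
      = Real.exp (-(FF g a)) - Real.exp (-(FF g b)) := by
  set LHS := ∫ x in Set.Ioo a b, g x * Real.exp (-(FF g x)) with hLHS
  set RHS := Real.exp (-(FF g a)) - Real.exp (-(FF g b)) with hRHS
  have hFb0 : 0 ≤ FF g b := FF_nonneg hg b
  have main : ∀ ε : ℝ, 0 < ε → ε ≤ 1 → |LHS - RHS| ≤ ε * (4 + FF g b) := by
    intro ε hε hε1
    set G := (Set.Ioo (0:ℝ) b).indicator g with hGdef
    have hGint : Integrable G := (integrable_indicator_iff measurableSet_Ioo).2 (hloc b)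
    obtain ⟨φ, φsupp, φerr, φcont, φint⟩ := hGint.exists_hasCompactSupport_integral_sub_le hε
    set ψ := fun x => max (φ x) 0 with hψdef
    have hψc : Continuous ψ := φcont.max continuous_const
    have hψ : ∀ x, 0 ≤ ψ x := fun x => le_max_right _ _
    have hψint : Integrable ψ := φint.pos_part
    have hGnn : ∀ x, 0 ≤ G x := fun x => Set.indicator_nonneg (fun y _ => hg y) x
    have hptw : ∀ x, ‖G x - ψ x‖ ≤ ‖G x - φ x‖ := by
      intro x
      rw [Real.norm_eq_abs, Real.norm_eq_abs]
      rcases le_or_gt 0 (φ x) with hc | hc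
      · have : ψ x = φ x := max_eq_left hc
        rw [this]
      · have : ψ x = 0 := max_eq_right hc.le
        rw [this, sub_zero, abs_of_nonneg (hGnn x), abs_of_nonneg (by nlinarith [hGnn x])]
        nlinarith [hGnn x]
    have hGψint : Integrable (fun x => G x - ψ x) := hGint.sub hψint
    have hGφint : Integrable (fun x => G x - φ x) := hGint.sub φint
    have herr : (∫ x, ‖G x - ψ x‖) ≤ ε :=
      le_trans (integral_mono hGψint.norm hGφint.norm hptw) φerr
    have hψloc : ∀ x, IntegrableOn ψ (Set.Ioo 0 x) := fun x => hψint.integrableOn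
    have hFψnn : ∀ x, 0 ≤ FF ψ x := FF_nonneg hψ
    have hFdiff : ∀ x, 0 ≤ x → x ≤ b → |FF g x - FF ψ x| ≤ ε := by
      intro x hx0 hxb
      have h1 : FF g x = ∫ y in Set.Ioo 0 x, G y := by
        apply setIntegral_congr_fun measurableSet_Ioo
        intro y hy
        rw [hGdef, Set.indicator_of_mem (Set.Ioo_subset_Ioo le_rfl hxb hy)]
      have h2 : FF g x - FF ψ x = ∫ y in Set.Ioo 0 x, (G y - ψ y) := by
        rw [h1]
        exact (integral_sub hGint.integrableOn hψint.integrableOn).symm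
      rw [h2, ← Real.norm_eq_abs]
      calc ‖∫ y in Set.Ioo 0 x, (G y - ψ y)‖ ≤ ∫ y in Set.Ioo 0 x, ‖G y - ψ y‖ :=
            norm_integral_le_integral_norm _
        _ ≤ ∫ y, ‖G y - ψ y‖ :=
            integral_mono_measure Measure.restrict_le_self
              (Filter.Eventually.of_forall fun y => norm_nonneg _) hGψint.norm
        _ ≤ ε := herr
    have hkψ := cont_key hψc hψ ha hab
    have hint1 : IntegrableOn (fun x => g x * Real.exp (-(FF g x))) (Set.Ioo a b) :=
      integrableOn_mul_exp hm hg hloc ha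
    have hint2 : IntegrableOn (fun x => ψ x * Real.exp (-(FF ψ x))) (Set.Ioo a b) :=
      integrableOn_mul_exp hψc.measurable hψ hψloc ha
    have hbound : ∀ x ∈ Set.Ioo a b,
        ‖g x * Real.exp (-(FF g x)) - ψ x * Real.exp (-(FF ψ x))‖ ≤ |g x - ψ x| + ε * ψ x := by
      intro x hx
      have hx0 : 0 ≤ x := ha.trans hx.1.le
      have hFd := hFdiff x hx0 hx.2.le
      have e1 : Real.exp (-(FF g x)) ≤ 1 := Real.exp_le_one_iff.2 (neg_nonpos.2 (FF_nonneg hg x))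
      have e1' : 0 < Real.exp (-(FF g x)) := Real.exp_pos _
      have e2 : |Real.exp (-(FF g x)) - Real.exp (-(FF ψ x))| ≤ ε :=
        le_trans (exp_neg_lip (FF_nonneg hg x) (hFψnn x)) hFd
      have hsplit : g x * Real.exp (-(FF g x)) - ψ x * Real.exp (-(FF ψ x))
          = (g x - ψ x) * Real.exp (-(FF g x))
            + ψ x * (Real.exp (-(FF g x)) - Real.exp (-(FF ψ x))) := by ring
      rw [Real.norm_eq_abs, hsplit]
      calc |(g x - ψ x) * Real.exp (-(FF g x))
            + ψ x * (Real.exp (-(FF g x)) - Real.exp (-(FF ψ x)))|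
          ≤ |(g x - ψ x) * Real.exp (-(FF g x))|
            + |ψ x * (Real.exp (-(FF g x)) - Real.exp (-(FF ψ x)))| := abs_add_le _ _
        _ = |g x - ψ x| * Real.exp (-(FF g x))
            + ψ x * |Real.exp (-(FF g x)) - Real.exp (-(FF ψ x))| := by
            rw [abs_mul, abs_mul, abs_of_nonneg e1'.le, abs_of_nonneg (hψ x)]
        _ ≤ |g x - ψ x| * 1 + ψ x * ε := by
            have q1 := mul_le_mul_of_nonneg_left e1 (abs_nonneg (g x - ψ x))
            have q2 := mul_le_mul_of_nonneg_left e2 (hψ x)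
            linarith
        _ = |g x - ψ x| + ε * ψ x := by ring
    have hb2a : IntegrableOn (fun x => |g x - ψ x|) (Set.Ioo a b) := by
      have hgi : IntegrableOn g (Set.Ioo a b) :=
        (hloc b).mono_set (Set.Ioo_subset_Ioo ha le_rfl)
      exact (hgi.sub hψint.integrableOn).abs
    have hb2 : IntegrableOn (fun x => |g x - ψ x| + ε * ψ x) (Set.Ioo a b) :=
      hb2a.add ((hψint.integrableOn).const_mul ε)
    have hψIb : (∫ x in Set.Ioo a b, ψ x) ≤ FF g b + ε := by
      have h1 : (∫ x in Set.Ioo a b, ψ x) ≤ FF ψ b := by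
        apply setIntegral_mono_set hψint.integrableOn
          (Filter.Eventually.of_forall fun y => hψ y)
        exact Filter.Eventually.of_forall (Set.Ioo_subset_Ioo ha le_rfl)
      have h2 := hFdiff b (ha.trans hab) le_rfl
      rw [abs_le] at h2
      linarith
    have hgψab : (∫ x in Set.Ioo a b, |g x - ψ x|) ≤ ε := by
      have heq : (∫ x in Set.Ioo a b, |g x - ψ x|) = ∫ x in Set.Ioo a b, ‖G x - ψ x‖ := by
        apply setIntegral_congr_fun measurableSet_Ioo
        intro y hy
        dsimp only
        rw [Real.norm_eq_abs, hGdef,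
          Set.indicator_of_mem (Set.Ioo_subset_Ioo ha le_rfl hy)]
      rw [heq]
      calc (∫ x in Set.Ioo a b, ‖G x - ψ x‖) ≤ ∫ x, ‖G x - ψ x‖ :=
            integral_mono_measure Measure.restrict_le_self
              (Filter.Eventually.of_forall fun y => norm_nonneg _) hGψint.norm
        _ ≤ ε := herr
    have step1 : |LHS - ∫ x in Set.Ioo a b, ψ x * Real.exp (-(FF ψ x))|
        ≤ ε + ε * (FF g b + ε) := by
      rw [hLHS, ← integral_sub hint1 hint2, ← Real.norm_eq_abs]
      calc ‖∫ x in Set.Ioo a b, (g x * Real.exp (-(FF g x)) - ψ x * Real.exp (-(FF ψ x)))‖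
          ≤ ∫ x in Set.Ioo a b, ‖g x * Real.exp (-(FF g x)) - ψ x * Real.exp (-(FF ψ x))‖ :=
            norm_integral_le_integral_norm _
        _ ≤ ∫ x in Set.Ioo a b, (|g x - ψ x| + ε * ψ x) := by
            apply setIntegral_mono_on ((hint1.sub hint2).norm) hb2 measurableSet_Ioo hbound
        _ = (∫ x in Set.Ioo a b, |g x - ψ x|) + ε * ∫ x in Set.Ioo a b, ψ x := by
            rw [integral_add hb2a ((hψint.integrableOn).const_mul ε), integral_const_mul]
        _ ≤ ε + ε * (FF g b + ε) := by
            have := mul_le_mul_of_nonneg_left hψIb hε.le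
            linarith
    have step2 : |(∫ x in Set.Ioo a b, ψ x * Real.exp (-(FF ψ x))) - RHS| ≤ ε + ε := by
      rw [hkψ, hRHS]
      have ea : |Real.exp (-(FF ψ a)) - Real.exp (-(FF g a))| ≤ ε := by
        refine le_trans (exp_neg_lip (hFψnn a) (FF_nonneg hg a)) ?_
        rw [abs_sub_comm]
        exact hFdiff a ha hab
      have eb : |Real.exp (-(FF ψ b)) - Real.exp (-(FF g b))| ≤ ε := by
        refine le_trans (exp_neg_lip (hFψnn b) (FF_nonneg hg b)) ?_
        rw [abs_sub_comm]
        exact hFdiff b (ha.trans hab) le_rfl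
      rw [abs_le] at ea eb ⊢
      constructor <;> [linarith; linarith]
    calc |LHS - RHS| ≤ |LHS - ∫ x in Set.Ioo a b, ψ x * Real.exp (-(FF ψ x))|
          + |(∫ x in Set.Ioo a b, ψ x * Real.exp (-(FF ψ x))) - RHS| := abs_sub_le _ _ _
      _ ≤ (ε + ε * (FF g b + ε)) + (ε + ε) := add_le_add step1 step2
      _ ≤ ε * (4 + FF g b) := by nlinarith
  by_contra hne
  have hpos : 0 < |LHS - RHS| := by
    rcases lt_or_eq_of_le (abs_nonneg (LHS - RHS)) with hp | hp
    · exact hp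
    · exact absurd (by linarith [abs_eq_zero.1 hp.symm] : LHS = RHS) hne
  set δ := |LHS - RHS| with hδdef
  have hC : (0:ℝ) < 4 + FF g b := by linarith
  have hε : 0 < min 1 (δ / (2 * (4 + FF g b))) :=
    lt_min one_pos (div_pos hpos (by linarith))
  have hle := main _ hε (min_le_left _ _)
  have : min 1 (δ / (2 * (4 + FF g b))) * (4 + FF g b) ≤ δ / 2 := by
    calc min 1 (δ / (2 * (4 + FF g b))) * (4 + FF g b)
        ≤ (δ / (2 * (4 + FF g b))) * (4 + FF g b) :=
          mul_le_mul_of_nonneg_right (min_le_right _ _) hC.le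
      _ = δ / 2 := by field_simp
  linarith

lemma tail {g : ℝ → ℝ} (hm : Measurable g) (hg : ∀ x, 0 ≤ g x)
    (hloc : ∀ x, IntegrableOn g (Set.Ioo 0 x))
    (hdiv : Tendsto (FF g) atTop atTop) {c : ℝ} (hc : 0 ≤ c) :
    ∫⁻ x in Set.Ioi c, ENNReal.ofReal (g x * Real.exp (-(FF g x)))
      = ENNReal.ofReal (Real.exp (-(FF g c))) := by
  have hFm : Measurable (FF g) := (FF_mono hg hloc).measurable
  have hdm : Measurable fun x => ENNReal.ofReal (g x * Real.exp (-(FF g x))) :=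
    (hm.mul ((hFm.neg).exp)).ennreal_ofReal
  set ρ := volume.withDensity (fun x => ENNReal.ofReal (g x * Real.exp (-(FF g x)))) with hρ
  have happ : ∀ s : Set ℝ, MeasurableSet s →
      ρ s = ∫⁻ x in s, ENNReal.ofReal (g x * Real.exp (-(FF g x))) :=
    fun s hs => withDensity_apply _ hs
  have hU : Set.Ioi c = ⋃ n : ℕ, Set.Ioo c (c + 1 + n) := by
    ext x
    simp only [Set.mem_Ioi, Set.mem_iUnion, Set.mem_Ioo]
    constructor
    · intro hx
      obtain ⟨n, hn⟩ := exists_nat_gt (x - c - 1)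
      exact ⟨n, hx, by linarith⟩
    · rintro ⟨n, h1, _⟩; exact h1
  have hmono : Monotone fun n : ℕ => Set.Ioo c (c + 1 + n) := by
    intro m n hmn
    apply Set.Ioo_subset_Ioo le_rfl
    have : (m:ℝ) ≤ n := Nat.cast_le.2 hmn
    linarith
  have hlim := tendsto_measure_iUnion_atTop (μ := ρ) hmono
  rw [← hU] at hlim
  have hval : ∀ n : ℕ, ρ (Set.Ioo c (c + 1 + n))
      = ENNReal.ofReal (Real.exp (-(FF g c)) - Real.exp (-(FF g (c + 1 + n)))) := by
    intro n
    rw [happ _ measurableSet_Ioo,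
      ← ofReal_integral_eq_lintegral_ofReal (integrableOn_mul_exp hm hg hloc hc)
        (Filter.Eventually.of_forall fun x => mul_nonneg (hg x) (Real.exp_pos _).le),
      key hm hg hloc hc (by linarith [Nat.cast_nonneg (α := ℝ) n])]
  have hblow : Tendsto (fun n : ℕ => FF g (c + 1 + n)) atTop atTop := by
    apply hdiv.comp
    exact tendsto_atTop_add_const_left _ _ tendsto_natCast_atTop_atTop
  have hlim2 : Tendsto (fun n : ℕ => ρ (Set.Ioo c (c + 1 + n))) atTop
      (nhds (ENNReal.ofReal (Real.exp (-(FF g c))))) := by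
    simp_rw [hval]
    apply ENNReal.tendsto_ofReal
    have h3 : Tendsto (fun n : ℕ => Real.exp (-(FF g (c + 1 + n)))) atTop (nhds 0) := by
      apply Real.tendsto_exp_atBot.comp
      exact tendsto_neg_atBot_iff.2 hblow
    simpa using tendsto_const_nhds.sub h3
  rw [← happ _ measurableSet_Ioi]
  exact tendsto_nhds_unique hlim hlim2

lemma nu_Ioi {g : ℝ → ℝ} (hm : Measurable g) (hg : ∀ x, 0 ≤ g x)
    (hloc : ∀ x, IntegrableOn g (Set.Ioo 0 x))
    (hdiv : Tendsto (FF g) atTop atTop) {c : ℝ} (hc : 0 ≤ c) :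
    ((volume.restrict (Set.Ioi (0:ℝ))).withDensity
        (fun x => ENNReal.ofReal (g x * Real.exp (-(FF g x))))) (Set.Ioi c)
      = ENNReal.ofReal (Real.exp (-(FF g c))) := by
  rw [withDensity_apply _ measurableSet_Ioi, Measure.restrict_restrict measurableSet_Ioi,
    Set.inter_eq_left.2 (Set.Ioi_subset_Ioi hc)]
  exact tail hm hg hloc hdiv hc

lemma nu_upperset {g : ℝ → ℝ} (hm : Measurable g) (hg : ∀ x, 0 ≤ g x)
    (hloc : ∀ x, IntegrableOn g (Set.Ioo 0 x))
    (hdiv : Tendsto (FF g) atTop atTop) {S : Set ℝ} (hne : S.Nonempty)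
    (hS0 : S ⊆ Set.Ioi 0) (hup : ∀ x ∈ S, ∀ y, x ≤ y → y ∈ S) :
    ((volume.restrict (Set.Ioi (0:ℝ))).withDensity
        (fun x => ENNReal.ofReal (g x * Real.exp (-(FF g x))))) S
      = ENNReal.ofReal (Real.exp (-(FF g (sInf S)))) := by
  set ν := (volume.restrict (Set.Ioi (0:ℝ))).withDensity
      (fun x => ENNReal.ofReal (g x * Real.exp (-(FF g x)))) with hν
  have hbdd : BddBelow S := ⟨0, fun x hx => (hS0 hx).le⟩
  set c := sInf S with hcdef
  have hc0 : 0 ≤ c := le_csInf hne (fun x hx => (hS0 hx).le)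
  have hIoi : Set.Ioi c ⊆ S := by
    intro y hy
    obtain ⟨x, hxS, hxy⟩ := exists_lt_of_csInf_lt hne hy
    exact hup x hxS y hxy.le
  have hIci : S ⊆ Set.Ici c := fun x hx => csInf_le hbdd hx
  have hsing : ν {c} = 0 := by
    rw [hν, withDensity_apply _ (measurableSet_singleton c)]
    have h0 : (volume.restrict (Set.Ioi (0:ℝ))) {c} = 0 := by
      rw [Measure.restrict_apply (measurableSet_singleton c)]
      exact measure_mono_null Set.inter_subset_left (measure_singleton c)
    exact setLIntegral_measure_zero _ _ h0
  have h1 : ν S ≤ ν (Set.Ioi c) := by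
    calc ν S ≤ ν (Set.Ici c) := measure_mono hIci
      _ = ν (insert c (Set.Ioi c)) := by rw [Set.Ioi_insert]
      _ ≤ ν {c} + ν (Set.Ioi c) := by
          rw [Set.insert_eq]
          exact measure_union_le _ _
      _ = ν (Set.Ioi c) := by rw [hsing, zero_add]
  have h2 : ν (Set.Ioi c) ≤ ν S := measure_mono hIoi
  rw [le_antisymm h1 h2]
  exact nu_Ioi hm hg hloc hdiv hc0

lemma repr_eq {H : ℝ → ℝ} (hHmeas : Measurable H) (hHnn : ∀ x, 0 ≤ H x)
    {g : ℝ → ℝ} (hm : Measurable g) (hg : ∀ x, 0 ≤ g x)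
    (hloc : ∀ x, IntegrableOn g (Set.Ioo 0 x)) :
    ∫ x in Set.Ioi 0, H x * (g x * Real.exp (-(FF g x)))
      = (∫⁻ x, ENNReal.ofReal (H x) ∂((volume.restrict (Set.Ioi (0:ℝ))).withDensity
          (fun x => ENNReal.ofReal (g x * Real.exp (-(FF g x)))))).toReal := by
  have hFm : Measurable (FF g) := (FF_mono hg hloc).measurable
  have hdm : Measurable fun x => ENNReal.ofReal (g x * Real.exp (-(FF g x))) :=
    (hm.mul ((hFm.neg).exp)).ennreal_ofReal
  rw [integral_eq_lintegral_of_nonneg_ae (f := fun x => H x * (g x * Real.exp (-(FF g x))))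
    (Filter.Eventually.of_forall fun x =>
      mul_nonneg (hHnn x) (mul_nonneg (hg x) (Real.exp_pos _).le))
    ((hHmeas.mul (hm.mul ((hFm.neg).exp))).aestronglyMeasurable)]
  congr 1
  rw [lintegral_withDensity_eq_lintegral_mul _ hdm hHmeas.ennreal_ofReal]
  apply lintegral_congr
  intro a
  simp only [Pi.mul_apply]
  rw [ENNReal.ofReal_mul (hHnn a), mul_comm]

end Stmt15

open Stmt15 in
/-- For a fixed positive, non-decreasing, bounded `h` on `(0,∞)`, the
map `f ↦ ∫_0^∞ h(x) f(x) exp(-∫_0^x f(y) dy) dx` is non-increasing in `f` on the class of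
measurable, non-negative, locally integrable functions on `(0,∞)` with divergent
integral: if `f₁ ≤ f₂` pointwise on `(0,∞)`, then `I(f₁) ≥ I(f₂)`. -/
theorem functional_I_antitone_pointwise
    (h f₁ f₂ : ℝ → ℝ)
    (hh_pos : ∀ x, 0 < x → 0 < h x)
    (hh_mono : MonotoneOn h (Set.Ioi 0))
    (hh_bdd : ∃ M, ∀ x, 0 < x → h x ≤ M)
    (hf₁_meas : Measurable f₁)
    (hf₂_meas : Measurable f₂)
    (hf₁_nonneg : ∀ x, 0 < x → 0 ≤ f₁ x)
    (hf₂_nonneg : ∀ x, 0 < x → 0 ≤ f₂ x)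
    (hf₁_loc : ∀ x, 0 < x → IntegrableOn f₁ (Set.Ioo 0 x))
    (hf₂_loc : ∀ x, 0 < x → IntegrableOn f₂ (Set.Ioo 0 x))
    (hf₁_div : Tendsto (fun x => ∫ y in Set.Ioo 0 x, f₁ y) atTop atTop)
    (hf₂_div : Tendsto (fun x => ∫ y in Set.Ioo 0 x, f₂ y) atTop atTop)
    (hle : ∀ x, 0 < x → f₁ x ≤ f₂ x) :
    ∫ x in Set.Ioi 0, h x * f₂ x * Real.exp (-(∫ y in Set.Ioo 0 x, f₂ y)) ≤
      ∫ x in Set.Ioi 0, h x * f₁ x * Real.exp (-(∫ y in Set.Ioo 0 x, f₁ y)) := by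
  classical
  obtain ⟨M, hM⟩ := hh_bdd
  set g₁ := (Set.Ioi (0:ℝ)).indicator f₁ with hg₁def
  set g₂ := (Set.Ioi (0:ℝ)).indicator f₂ with hg₂def
  have hm₁ : Measurable g₁ := hf₁_meas.indicator measurableSet_Ioi
  have hm₂ : Measurable g₂ := hf₂_meas.indicator measurableSet_Ioi
  have hnn₁ : ∀ x, 0 ≤ g₁ x := fun x => Set.indicator_nonneg (fun y hy => hf₁_nonneg y hy) x
  have hnn₂ : ∀ x, 0 ≤ g₂ x := fun x => Set.indicator_nonneg (fun y hy => hf₂_nonneg y hy) x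
  have hloc₁ : ∀ x, IntegrableOn g₁ (Set.Ioo 0 x) := by
    intro x
    rcases le_or_gt x 0 with hx | hx
    · rw [Set.Ioo_eq_empty (by intro hlt; linarith [hlt.trans_le hx] : ¬ (0:ℝ) < x)]
      exact integrableOn_empty
    · exact (hf₁_loc x hx).congr_fun
        (fun y hy => (Set.indicator_of_mem (Set.mem_Ioi.2 hy.1) f₁).symm) measurableSet_Ioo
  have hloc₂ : ∀ x, IntegrableOn g₂ (Set.Ioo 0 x) := by
    intro x
    rcases le_or_gt x 0 with hx | hx
    · rw [Set.Ioo_eq_empty (by intro hlt; linarith [hlt.trans_le hx] : ¬ (0:ℝ) < x)]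
      exact integrableOn_empty
    · exact (hf₂_loc x hx).congr_fun
        (fun y hy => (Set.indicator_of_mem (Set.mem_Ioi.2 hy.1) f₂).symm) measurableSet_Ioo
  have hFF₁ : ∀ x, FF g₁ x = ∫ y in Set.Ioo 0 x, f₁ y := fun x =>
    setIntegral_congr_fun measurableSet_Ioo
      (fun y hy => Set.indicator_of_mem (Set.mem_Ioi.2 hy.1) f₁)
  have hFF₂ : ∀ x, FF g₂ x = ∫ y in Set.Ioo 0 x, f₂ y := fun x =>
    setIntegral_congr_fun measurableSet_Ioo
      (fun y hy => Set.indicator_of_mem (Set.mem_Ioi.2 hy.1) f₂)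
  have hdiv₁ : Tendsto (FF g₁) atTop atTop := by
    have : FF g₁ = fun x => ∫ y in Set.Ioo 0 x, f₁ y := funext hFF₁
    rw [this]; exact hf₁_div
  have hdiv₂ : Tendsto (FF g₂) atTop atTop := by
    have : FF g₂ = fun x => ∫ y in Set.Ioo 0 x, f₂ y := funext hFF₂
    rw [this]; exact hf₂_div
  set H : ℝ → ℝ := fun x => if 0 < x then h x else 0 with hHdef
  have hHmono : Monotone H := by
    intro x y hxy
    simp only [hHdef]
    by_cases hx : 0 < x
    · have hy : 0 < y := lt_of_lt_of_le hx hxy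
      rw [if_pos hx, if_pos hy]
      exact hh_mono hx hy hxy
    · rw [if_neg hx]
      by_cases hy : 0 < y
      · rw [if_pos hy]; exact (hh_pos y hy).le
      · rw [if_neg hy]
  have hHmeas : Measurable H := hHmono.measurable
  have hHnn : ∀ x, 0 ≤ H x := by
    intro x
    simp only [hHdef]
    split
    · exact (hh_pos x ‹_›).le
    · exact le_rfl
  have hHleM : ∀ x, H x ≤ max M 0 := by
    intro x
    simp only [hHdef]
    split
    · exact le_max_of_le_left (hM x ‹_›)
    · exact le_max_right _ _
  set ν₁ := (volume.restrict (Set.Ioi (0:ℝ))).withDensity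
      (fun x => ENNReal.ofReal (g₁ x * Real.exp (-(FF g₁ x)))) with hν₁
  set ν₂ := (volume.restrict (Set.Ioi (0:ℝ))).withDensity
      (fun x => ENNReal.ofReal (g₂ x * Real.exp (-(FF g₂ x)))) with hν₂
  have eq₁ : ∫ x in Set.Ioi 0, h x * f₁ x * Real.exp (-(∫ y in Set.Ioo 0 x, f₁ y))
      = (∫⁻ x, ENNReal.ofReal (H x) ∂ν₁).toReal := by
    rw [← repr_eq hHmeas hHnn hm₁ hnn₁ hloc₁]
    apply setIntegral_congr_fun measurableSet_Ioi
    intro x hx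
    simp only [hHdef]
    rw [if_pos (Set.mem_Ioi.1 hx), hg₁def, Set.indicator_of_mem hx, hFF₁, mul_assoc]
  have eq₂ : ∫ x in Set.Ioi 0, h x * f₂ x * Real.exp (-(∫ y in Set.Ioo 0 x, f₂ y))
      = (∫⁻ x, ENNReal.ofReal (H x) ∂ν₂).toReal := by
    rw [← repr_eq hHmeas hHnn hm₂ hnn₂ hloc₂]
    apply setIntegral_congr_fun measurableSet_Ioi
    intro x hx
    simp only [hHdef]
    rw [if_pos (Set.mem_Ioi.1 hx), hg₂def, Set.indicator_of_mem hx, hFF₂, mul_assoc]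
  have layer₁ : ∫⁻ x, ENNReal.ofReal (H x) ∂ν₁
      = ∫⁻ t in Set.Ioi 0, ν₁ {a | t < H a} :=
    lintegral_eq_lintegral_meas_lt ν₁ (Filter.Eventually.of_forall hHnn) hHmeas.aemeasurable
  have layer₂ : ∫⁻ x, ENNReal.ofReal (H x) ∂ν₂
      = ∫⁻ t in Set.Ioi 0, ν₂ {a | t < H a} :=
    lintegral_eq_lintegral_meas_lt ν₂ (Filter.Eventually.of_forall hHnn) hHmeas.aemeasurable
  have comp : ∀ t : ℝ, 0 < t → ν₂ {a | t < H a} ≤ ν₁ {a | t < H a} := by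
    intro t ht
    set S := {a : ℝ | t < H a} with hSdef
    have hS0 : S ⊆ Set.Ioi 0 := by
      intro x hx
      by_contra hx0
      have : H x = 0 := by simp only [hHdef]; rw [if_neg (fun hc => hx0 (Set.mem_Ioi.2 hc))]
      rw [hSdef] at hx
      simp only [Set.mem_setOf_eq, this] at hx
      linarith
    have hup : ∀ x ∈ S, ∀ y, x ≤ y → y ∈ S := by
      intro x hx y hxy
      exact lt_of_lt_of_le hx (hHmono hxy)
    rcases Set.eq_empty_or_nonempty S with hSe | hne
    · rw [hSe]
      simp
    · rw [hν₁, hν₂, nu_upperset hm₁ hnn₁ hloc₁ hdiv₁ hne hS0 hup,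
        nu_upperset hm₂ hnn₂ hloc₂ hdiv₂ hne hS0 hup]
      apply ENNReal.ofReal_le_ofReal
      apply Real.exp_le_exp.2
      apply neg_le_neg
      have hc0 : 0 ≤ sInf S := le_csInf hne (fun x hx => (hS0 hx).le)
      apply setIntegral_mono_on (hloc₁ _) (hloc₂ _) measurableSet_Ioo
      intro y hy
      rw [hg₁def, hg₂def, Set.indicator_of_mem (Set.mem_Ioi.2 hy.1),
        Set.indicator_of_mem (Set.mem_Ioi.2 hy.1)]
      exact hle y hy.1
  have hfin : (∫⁻ x, ENNReal.ofReal (H x) ∂ν₁) ≠ ⊤ := by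
    have hb : (∫⁻ x, ENNReal.ofReal (H x) ∂ν₁) ≤ ENNReal.ofReal (max M 0) * ν₁ Set.univ := by
      calc (∫⁻ x, ENNReal.ofReal (H x) ∂ν₁)
          ≤ ∫⁻ _, ENNReal.ofReal (max M 0) ∂ν₁ :=
            lintegral_mono fun a => ENNReal.ofReal_le_ofReal (hHleM a)
        _ = ENNReal.ofReal (max M 0) * ν₁ Set.univ := lintegral_const _
    have huniv : ν₁ Set.univ ≤ ENNReal.ofReal (Real.exp (-(FF g₁ 0))) := by
      have hsplit : (Set.univ : Set ℝ) = Set.Ioi (0:ℝ) ∪ Set.Iic 0 := by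
        ext x; simp [lt_or_ge 0 x, le_of_lt]
      have h1 := nu_Ioi hm₁ hnn₁ hloc₁ hdiv₁ (le_refl (0:ℝ))
      have h2 : ((volume.restrict (Set.Ioi (0:ℝ))).withDensity
          (fun x => ENNReal.ofReal (g₁ x * Real.exp (-(FF g₁ x))))) (Set.Iic 0) = 0 := by
        rw [withDensity_apply _ measurableSet_Iic,
          Measure.restrict_restrict measurableSet_Iic]
        have he : Set.Iic (0:ℝ) ∩ Set.Ioi 0 = ∅ := by
          ext x; simp only [Set.mem_inter_iff, Set.mem_Iic, Set.mem_Ioi, Set.mem_empty_iff_false,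
            iff_false, not_and]
          intro hx; linarith
        rw [he]
        simp
      rw [hν₁]
      calc ((volume.restrict (Set.Ioi (0:ℝ))).withDensity
            (fun x => ENNReal.ofReal (g₁ x * Real.exp (-(FF g₁ x))))) Set.univ
          ≤ _ + _ := by rw [hsplit]; exact measure_union_le _ _
        _ = ENNReal.ofReal (Real.exp (-(FF g₁ 0))) := by rw [h1, h2, add_zero]
    refine ne_top_of_le_ne_top (ENNReal.mul_ne_top ENNReal.ofReal_ne_top ENNReal.ofReal_ne_top)
      (hb.trans (mul_le_mul_right huniv _))
  rw [eq₁, eq₂]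
  apply ENNReal.toReal_mono hfin
  rw [layer₁, layer₂]
  apply lintegral_mono_ae
  filter_upwards [self_mem_ae_restrict measurableSet_Ioi] with t ht
  exact comp t (Set.mem_Ioi.1 ht)
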